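/- Let m be a positive integer and n a divisor of m. Then for every r ∈ Z/2mZ, the index m theta function satisfies θ_{m,r}|W_m(n) = Σ_{r' mod 2m} Ω_m(n)_{r,r'} θ_{m,r'}; equivalently, θ_m|W_m(n) = Ω_m(n)·θ_m. Consequently, for any vector (h_r)_{r mod 2m} of functions on the upper half-plane, (Σ_r h_r θ_{m,r})|W_m(n) = Σ_{r,r' mod 2m} h_r Ω_m(n)_{r,r'} θ_{m,r'}. -/

import Mathlib

noncomputable section

open Topology MeasureTheory

/-- `e2 x = e^{2πix}`. -/
def e2 (x : ℂ) : ℂ := Complex.exp (2 * (Real.pi : ℂ) * Complex.I * x)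

/-- The upper half-plane, viewed as a subset of `ℂ`. -/
def UHP : Set ℂ := {τ : ℂ | 0 < τ.im}
/-- The index `m` theta function `θ_{m,r}(τ,z) = Σ_{k ≡ r mod 2m} q^{k²/4m} y^k`.
It depends only on `r` modulo `2m`. -/
def jacTheta (m : ℕ) (r : ℤ) (τ z : ℂ) : ℂ :=
  ∑' k : ℤ, if (2 * (m : ℤ)) ∣ (k - r) then
    e2 ((k : ℂ) ^ 2 / (4 * (m : ℂ)) * τ + (k : ℂ) * z) else 0

/-- The weight `3/2` unary theta function `S_{m,r}(τ) = Σ_{k ≡ r mod 2m} k q^{k²/4m}`. -/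
def unaryTheta (m : ℕ) (r : ℤ) (τ : ℂ) : ℂ :=
  ∑' k : ℤ, if (2 * (m : ℤ)) ∣ (k - r) then (k : ℂ) * e2 ((k : ℂ) ^ 2 / (4 * (m : ℂ)) * τ) else 0

/-- The index `m` elliptic transformation `φ ↦ φ|_m(λ,μ)`. -/
def ellAct (m lm mu : ℤ) (φ : ℂ → ℂ → ℂ) : ℂ → ℂ → ℂ := fun τ z =>
  e2 ((m : ℂ) * ((lm : ℂ) ^ 2 * τ + 2 * (lm : ℂ) * z)) * φ τ (z + (lm : ℂ) * τ + (mu : ℂ))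

/-- The weight `k`, index `m` modular transformation `φ ↦ φ|_{k,m}γ` for `γ ∈ SL₂(ℤ)`. -/
def slAct (k m : ℤ) (γ : Matrix.SpecialLinearGroup (Fin 2) ℤ) (φ : ℂ → ℂ → ℂ) :
    ℂ → ℂ → ℂ := fun τ z =>
  ((γ 1 0 : ℂ) * τ + (γ 1 1 : ℂ)) ^ (-k) *
    e2 (-(m : ℂ) * (γ 1 0 : ℂ) * z ^ 2 / ((γ 1 0 : ℂ) * τ + (γ 1 1 : ℂ))) *
    φ (((γ 0 0 : ℂ) * τ + (γ 0 1 : ℂ)) / ((γ 1 0 : ℂ) * τ + (γ 1 1 : ℂ)))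
      (z / ((γ 1 0 : ℂ) * τ + (γ 1 1 : ℂ)))

/-- An unrestricted Jacobi form of weight `k` and index `m`: a holomorphic function on
`ℍ × ℂ` invariant under the elliptic and modular transformations. -/
def IsUnrestrictedJacobiForm (k m : ℤ) (φ : ℂ → ℂ → ℂ) : Prop :=
  DifferentiableOn ℂ (fun p : ℂ × ℂ => φ p.1 p.2) {p : ℂ × ℂ | p.1 ∈ UHP} ∧
  (∀ lm mu : ℤ, ∀ τ ∈ UHP, ∀ z : ℂ, ellAct m lm mu φ τ z = φ τ z) ∧
  (∀ γ : Matrix.SpecialLinearGroup (Fin 2) ℤ, ∀ τ ∈ UHP, ∀ z : ℂ, slAct k m γ φ τ z = φ τ z)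

/-- A weak Jacobi form: an unrestricted Jacobi form whose Fourier coefficients `c(n,r)`
vanish for `n < 0`. -/
def IsWeakJacobiForm (k m : ℤ) (φ : ℂ → ℂ → ℂ) : Prop :=
  IsUnrestrictedJacobiForm k m φ ∧
  ∃ c : ℤ → ℤ → ℂ, (∀ n r : ℤ, n < 0 → c n r = 0) ∧
    ∀ τ ∈ UHP, ∀ z : ℂ, φ τ z = ∑' p : ℤ × ℤ, c p.1 p.2 * e2 ((p.1 : ℂ) * τ + (p.2 : ℂ) * z)

/-- A strong Jacobi form: an unrestricted Jacobi form whose Fourier coefficients `c(n,r)`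
vanish whenever `r² - 4mn > 0`. -/
def IsStrongJacobiForm (k m : ℤ) (φ : ℂ → ℂ → ℂ) : Prop :=
  IsUnrestrictedJacobiForm k m φ ∧
  ∃ c : ℤ → ℤ → ℂ, (∀ n r : ℤ, r ^ 2 - 4 * m * n > 0 → c n r = 0) ∧
    ∀ τ ∈ UHP, ∀ z : ℂ, φ τ z = ∑' p : ℤ × ℤ, c p.1 p.2 * e2 ((p.1 : ℂ) * τ + (p.2 : ℂ) * z)

/-- The Eichler–Zagier operator `W_m(n)` on functions on `ℍ × ℂ`. -/
def ezOp (m n : ℕ) (f : ℂ → ℂ → ℂ) : ℂ → ℂ → ℂ := fun τ z =>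
  (n : ℂ)⁻¹ * ∑ a ∈ Finset.range n, ∑ b ∈ Finset.range n,
    e2 ((m : ℂ) * ((a : ℂ) ^ 2 / (n : ℂ) ^ 2 * τ + 2 * ((a : ℂ) / (n : ℂ)) * z +
      (a : ℂ) * (b : ℂ) / (n : ℂ) ^ 2)) * f τ (z + ((a : ℂ) / (n : ℂ)) * τ + (b : ℂ) / (n : ℂ))

/-- The `(r,r')` entry of the matrix `Ω_m(n)` (for `n ∣ m`), indexed by residues mod `2m`:
it is `1` if `r + r' ≡ 0 mod 2n` and `r - r' ≡ 0 mod 2m/n`, and `0` otherwise. -/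
def OmegaEnt (m n : ℕ) (r r' : ℤ) : ℂ :=
  if (2 * (n : ℤ)) ∣ (r + r') ∧ (2 * ((m / n : ℕ) : ℤ)) ∣ (r - r') then 1 else 0
lemma e2_add (x y : ℂ) : e2 (x + y) = e2 x * e2 y := by
  rw [e2, e2, e2, ← Complex.exp_add]; ring_nf

lemma e2_geom (n : ℕ) (hn : 0 < n) (x : ℤ) :
    ∑ b ∈ Finset.range n, e2 ((b : ℂ) * (x : ℂ) / (n : ℂ)) =
      if (n : ℤ) ∣ x then (n : ℂ) else 0 := by
  have hn' : (n : ℂ) ≠ 0 := Nat.cast_ne_zero.2 hn.ne'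
  have hb : ∀ b : ℕ, e2 ((b : ℂ) * (x : ℂ) / (n : ℂ)) = e2 ((x : ℂ) / n) ^ b := by
    intro b
    rw [e2, e2, ← Complex.exp_nat_mul]
    congr 1; ring
  simp_rw [hb]
  by_cases h : (n : ℤ) ∣ x
  · rw [if_pos h]
    obtain ⟨d, hd⟩ := h
    have h1 : e2 ((x : ℂ) / n) = 1 := by
      rw [e2]
      have : 2 * (Real.pi : ℂ) * Complex.I * ((x : ℂ) / n) = (d : ℂ) * (2 * Real.pi * Complex.I) := by
        rw [hd]; push_cast; field_simp
      rw [this, Complex.exp_int_mul_two_pi_mul_I]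
    simp [h1]
  · have hpi : (2 * (Real.pi : ℂ) * Complex.I) ≠ 0 := by
      simp [Real.pi_ne_zero, Complex.I_ne_zero]
    have hz : e2 ((x : ℂ) / n) ≠ 1 := by
      intro hone
      rw [e2, Complex.exp_eq_one_iff] at hone
      obtain ⟨t, ht⟩ := hone
      apply h
      refine ⟨t, ?_⟩
      have h2 : (x : ℂ) / n = t := by
        apply mul_left_cancel₀ hpi
        rw [ht]; ring
      have h3 : (x : ℂ) = n * t := by
        rw [← h2]; field_simp
      exact_mod_cast h3
    rw [geom_sum_eq hz]
    have hpow : e2 ((x : ℂ) / n) ^ n = 1 := by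
      rw [e2, ← Complex.exp_nat_mul]
      have : (n : ℂ) * (2 * (Real.pi : ℂ) * Complex.I * ((x : ℂ) / n)) = (x : ℂ) * (2 * Real.pi * Complex.I) := by
        field_simp
      rw [this, Complex.exp_int_mul_two_pi_mul_I]
    rw [hpow]
    simp [h]

lemma summable_e2 (m : ℕ) (hm : 0 < m) {τ : ℂ} (hτ : 0 < τ.im) (w c : ℂ)
    (p : ℤ → Prop) [DecidablePred p] :
    Summable fun k : ℤ => if p k then e2 ((k : ℂ) ^ 2 / (4 * (m : ℂ)) * τ + (k : ℂ) * w + c) else 0 := by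
  have hm' : (m : ℂ) ≠ 0 := Nat.cast_ne_zero.2 hm.ne'
  have h0 : 0 < (τ / (2 * (m : ℂ))).im := by
    have he : τ / (2 * (m : ℂ)) = ((2 * (m : ℝ))⁻¹ : ℝ) * τ := by
      push_cast; field_simp
    rw [he, Complex.im_ofReal_mul]
    have : (0:ℝ) < (2 * (m:ℝ))⁻¹ := by positivity
    positivity
  have base : Summable fun k : ℤ => jacobiTheta₂_term k w (τ / (2 * (m : ℂ))) :=
    (summable_jacobiTheta₂_term_iff w _).2 h0
  have hfe : ∀ k : ℤ, e2 ((k : ℂ) ^ 2 / (4 * (m : ℂ)) * τ + (k : ℂ) * w + c)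
      = jacobiTheta₂_term k w (τ / (2 * (m : ℂ))) * e2 c := by
    intro k
    rw [e2, e2, jacobiTheta₂_term, ← Complex.exp_add]
    congr 1
    field_simp
    ring
  apply Summable.of_norm_bounded ((base.mul_right (e2 c)).norm)
  intro k
  by_cases hp : p k
  · rw [if_pos hp, hfe k]
  · rw [if_neg hp]; simp [norm_nonneg]; positivity

lemma summable_e2' (m : ℕ) (hm : 0 < m) {τ : ℂ} (hτ : 0 < τ.im) (w : ℂ)
    (p : ℤ → Prop) [DecidablePred p] :
    Summable fun k : ℤ => if p k then e2 ((k : ℂ) ^ 2 / (4 * (m : ℂ)) * τ + (k : ℂ) * w) else 0 := by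
  have := summable_e2 m hm hτ w 0 p
  simpa using this

lemma count1 (n M m : ℕ) (hn : 0 < n) (hM : 0 < M) (hmM : (m : ℤ) = n * M) (r k : ℤ) :
    (∑ a ∈ Finset.range n, if ((2 * (m : ℤ)) ∣ (k - r - 2 * (M : ℤ) * a) ∧ (n : ℤ) ∣ (k - (M : ℤ) * a))
      then (1 : ℂ) else 0)
    = if ((2 * (n : ℤ)) ∣ (k + r) ∧ (2 * (M : ℤ)) ∣ (k - r)) then 1 else 0 := by
  have hPQ : ∀ a : ℕ, ((2 * (m : ℤ)) ∣ (k - r - 2 * (M : ℤ) * a) ∧ (n : ℤ) ∣ (k - (M : ℤ) * a)) →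
      ((2 * (n : ℤ)) ∣ (k + r) ∧ (2 * (M : ℤ)) ∣ (k - r)) := by
    rintro a ⟨⟨s, hs⟩, ⟨u, hu⟩⟩
    rw [hmM] at hs
    constructor
    · exact ⟨u - (M : ℤ) * s, by linear_combination 2 * hu - hs⟩
    · exact ⟨(n : ℤ) * s + a, by linear_combination hs⟩
  by_cases hQ : ((2 * (n : ℤ)) ∣ (k + r) ∧ (2 * (M : ℤ)) ∣ (k - r))
  · rw [if_pos hQ]
    obtain ⟨⟨v, hv⟩, ⟨t, ht⟩⟩ := hQ
    have hn' : (0 : ℤ) < n := by exact_mod_cast hn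
    have hM' : (0 : ℤ) < M := by exact_mod_cast hM
    set a₀ : ℕ := (t % n).toNat with ha₀
    have h₁ : (a₀ : ℤ) = t % n := Int.toNat_of_nonneg (Int.emod_nonneg t hn'.ne')
    have h₂ : a₀ < n := by
      have h3 := Int.emod_lt_of_pos t hn'
      omega
    obtain ⟨s, hs⟩ : (n : ℤ) ∣ (t - a₀) := ⟨t / n, by rw [h₁, Int.emod_def]; ring⟩
    have hPa₀ : ((2 * (m : ℤ)) ∣ (k - r - 2 * (M : ℤ) * a₀) ∧ (n : ℤ) ∣ (k - (M : ℤ) * a₀)) := by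
      constructor
      · exact ⟨s, by rw [hmM]; linear_combination ht + 2 * (M : ℤ) * hs⟩
      · refine ⟨v + (M : ℤ) * s, ?_⟩
        have h2 : 2 * (k - (M : ℤ) * a₀) = 2 * ((n : ℤ) * (v + (M : ℤ) * s)) := by
          linear_combination hv + ht + 2 * (M : ℤ) * hs
        exact mul_left_cancel₀ two_ne_zero h2
    have huniq : ∀ a ∈ Finset.range n,
        (((2 * (m : ℤ)) ∣ (k - r - 2 * (M : ℤ) * a) ∧ (n : ℤ) ∣ (k - (M : ℤ) * a)) ↔ a = a₀) := by
      intro a ha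
      rw [Finset.mem_range] at ha
      constructor
      · rintro ⟨⟨s', hs'⟩, -⟩
        rw [hmM] at hs'
        have hta : 2 * (M : ℤ) * (t - a) = 2 * (M : ℤ) * ((n : ℤ) * s') := by
          linear_combination hs' - ht
        have hta' : t - a = (n : ℤ) * s' :=
          mul_left_cancel₀ (by positivity) hta
        have hd : (a : ℤ) - a₀ = (n : ℤ) * (s - s') := by linear_combination hs - hta'
        have h0 : (a : ℤ) - a₀ = 0 := by
          refine Int.eq_zero_of_abs_lt_dvd ⟨s - s', hd⟩ ?_
          rw [abs_lt]
          constructor <;> omega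
        omega
      · rintro rfl; exact hPa₀
    calc (∑ a ∈ Finset.range n, if ((2 * (m : ℤ)) ∣ (k - r - 2 * (M : ℤ) * a) ∧ (n : ℤ) ∣ (k - (M : ℤ) * a))
      then (1 : ℂ) else 0)
        = ∑ a ∈ Finset.range n, if a = a₀ then (1 : ℂ) else 0 := by
          refine Finset.sum_congr rfl fun a ha => ?_
          simp only [huniq a ha]
      _ = 1 := by
          rw [Finset.sum_ite_eq' (Finset.range n) a₀ (fun _ => (1 : ℂ))]
          simp [Finset.mem_range, h₂]
  · rw [if_neg hQ]
    refine Finset.sum_eq_zero fun a _ => ?_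
    rw [if_neg]
    exact fun hPa => hQ (hPQ a hPa)

lemma count2 (n M m : ℕ) (hn : 0 < n) (hM : 0 < M) (hmM : (m : ℤ) = n * M) (r k : ℤ) :
    (∑ r' ∈ Finset.range (2 * m), if ((2 * (n : ℤ)) ∣ (r + r') ∧ (2 * (M : ℤ)) ∣ (r - r') ∧
      (2 * (m : ℤ)) ∣ (k - r')) then (1 : ℂ) else 0)
    = if ((2 * (n : ℤ)) ∣ (k + r) ∧ (2 * (M : ℤ)) ∣ (k - r)) then 1 else 0 := by
  have hm : 0 < m := by
    have : (0:ℤ) < m := by rw [hmM]; positivity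
    exact_mod_cast this
  have hPQ : ∀ a : ℕ, ((2 * (n : ℤ)) ∣ (r + a) ∧ (2 * (M : ℤ)) ∣ (r - a) ∧
      (2 * (m : ℤ)) ∣ (k - a)) → ((2 * (n : ℤ)) ∣ (k + r) ∧ (2 * (M : ℤ)) ∣ (k - r)) := by
    rintro a ⟨⟨u, hu⟩, ⟨v, hv⟩, ⟨w, hw⟩⟩
    rw [hmM] at hw
    constructor
    · exact ⟨(M : ℤ) * w + u, by linear_combination hw + hu⟩
    · exact ⟨(n : ℤ) * w - v, by linear_combination hw - hv⟩
  by_cases hQ : ((2 * (n : ℤ)) ∣ (k + r) ∧ (2 * (M : ℤ)) ∣ (k - r))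
  · rw [if_pos hQ]
    obtain ⟨⟨v, hv⟩, ⟨t, ht⟩⟩ := hQ
    have hm' : (0 : ℤ) < 2 * m := by positivity
    set r₀ : ℕ := (k % (2 * m)).toNat with hr₀
    have h₁ : (r₀ : ℤ) = k % (2 * m) := by
      rw [hr₀]
      exact Int.toNat_of_nonneg (Int.emod_nonneg k hm'.ne')
    have h₂ : r₀ < 2 * m := by
      have h3 := Int.emod_lt_of_pos k hm'
      omega
    obtain ⟨w, hw⟩ : (2 * (m : ℤ)) ∣ (k - r₀) := ⟨k / (2 * m), by push_cast at h₁ ⊢; rw [h₁, Int.emod_def]; push_cast; ring⟩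
    rw [hmM] at hw
    have hPr₀ : ((2 * (n : ℤ)) ∣ (r + r₀) ∧ (2 * (M : ℤ)) ∣ (r - r₀) ∧ (2 * (m : ℤ)) ∣ (k - r₀)) := by
      refine ⟨⟨v - (M : ℤ) * w, by linear_combination hv - hw⟩,
        ⟨(n : ℤ) * w - t, by linear_combination hw - ht⟩, ⟨w, by rw [hmM]; linear_combination hw⟩⟩
    have huniq : ∀ a ∈ Finset.range (2 * m),
        (((2 * (n : ℤ)) ∣ (r + a) ∧ (2 * (M : ℤ)) ∣ (r - a) ∧ (2 * (m : ℤ)) ∣ (k - a)) ↔ a = r₀) := by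
      intro a ha
      rw [Finset.mem_range] at ha
      constructor
      · rintro ⟨-, -, ⟨w', hw'⟩⟩
        rw [hmM] at hw'
        have hd : (a : ℤ) - r₀ = (2 * ((n : ℤ) * M)) * (w - w') := by linear_combination hw - hw'
        have h0 : (a : ℤ) - r₀ = 0 := by
          refine Int.eq_zero_of_abs_lt_dvd ⟨w - w', hd⟩ ?_
          rw [abs_lt]
          have hmm : (2 * ((n:ℤ) * M)) = 2 * (m:ℤ) := by rw [hmM]
          rw [hmm]
          push_cast
          constructor <;> omega
        omega
      · rintro rfl; exact hPr₀
    calc (∑ r' ∈ Finset.range (2 * m), if ((2 * (n : ℤ)) ∣ (r + r') ∧ (2 * (M : ℤ)) ∣ (r - r') ∧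
      (2 * (m : ℤ)) ∣ (k - r')) then (1 : ℂ) else 0)
        = ∑ r' ∈ Finset.range (2 * m), if r' = r₀ then (1 : ℂ) else 0 := by
          refine Finset.sum_congr rfl fun a ha => ?_
          simp only [huniq a ha]
      _ = 1 := by
          rw [Finset.sum_ite_eq' (Finset.range (2 * m)) r₀ (fun _ => (1 : ℂ))]
          simp [Finset.mem_range, h₂]
  · rw [if_neg hQ]
    refine Finset.sum_eq_zero fun a _ => ?_
    rw [if_neg]
    exact fun hPa => hQ (hPQ a hPa)

lemma key (m n : ℕ) (hm : 0 < m) (hn : n ∣ m) (r : ℤ) {τ : ℂ} (hτ : 0 < τ.im) (z : ℂ) :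
    ezOp m n (jacTheta m r) τ z
      = ∑' k : ℤ, if ((2 * (n : ℤ)) ∣ (k + r) ∧ (2 * ((m / n : ℕ) : ℤ)) ∣ (k - r)) then
          e2 ((k : ℂ) ^ 2 / (4 * (m : ℂ)) * τ + (k : ℂ) * z) else 0 := by
  classical
  have hn0 : 0 < n := Nat.pos_of_dvd_of_pos hn hm
  set M : ℕ := m / n with hMdef
  have hM0 : 0 < M := Nat.div_pos (Nat.le_of_dvd hm hn) hn0
  have hmM : (m : ℤ) = n * M := by exact_mod_cast (Nat.mul_div_cancel' hn).symm
  have hmMC : (m : ℂ) = n * M := by exact_mod_cast (Nat.mul_div_cancel' hn).symm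
  have hnC : (n : ℂ) ≠ 0 := Nat.cast_ne_zero.2 hn0.ne'
  have hMC : (M : ℂ) ≠ 0 := Nat.cast_ne_zero.2 hM0.ne'
  have hmC : (m : ℂ) ≠ 0 := Nat.cast_ne_zero.2 hm.ne'
  rw [ezOp]
  have stepA : ∀ a b : ℕ,
      e2 ((m : ℂ) * ((a : ℂ) ^ 2 / (n : ℂ) ^ 2 * τ + 2 * ((a : ℂ) / (n : ℂ)) * z +
        (a : ℂ) * (b : ℂ) / (n : ℂ) ^ 2)) *
        jacTheta m r τ (z + ((a : ℂ) / (n : ℂ)) * τ + (b : ℂ) / (n : ℂ))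
      = ∑' k : ℤ, if (2 * (m : ℤ)) ∣ (k - r - 2 * (M : ℤ) * a) then
          e2 ((k : ℂ) ^ 2 / (4 * (m : ℂ)) * τ + (k : ℂ) * (z + (b : ℂ) / (n : ℂ)) +
            (-((b : ℂ) * ((M : ℂ) * a) / (n : ℂ)))) else 0 := by
    intro a b
    rw [jacTheta, ← tsum_mul_left,
      ← (Equiv.addRight (2 * (M : ℤ) * a)).tsum_eq (fun k : ℤ =>
        if (2 * (m : ℤ)) ∣ (k - r - 2 * (M : ℤ) * a) then
          e2 ((k : ℂ) ^ 2 / (4 * (m : ℂ)) * τ + (k : ℂ) * (z + (b : ℂ) / (n : ℂ)) +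
            (-((b : ℂ) * ((M : ℂ) * a) / (n : ℂ)))) else 0)]
    apply tsum_congr
    intro k
    simp only [Equiv.coe_addRight]
    have hc : (k + 2 * (M : ℤ) * a) - r - 2 * (M : ℤ) * a = k - r := by ring
    simp only [hc]
    by_cases h : (2 * (m : ℤ)) ∣ (k - r)
    · rw [if_pos h, if_pos h, ← e2_add]
      congr 1
      push_cast
      rw [hmMC]
      have h1 : (n:ℂ) * (n:ℂ)⁻¹ = 1 := mul_inv_cancel₀ hnC
      have h2 : (M:ℂ) * (M:ℂ)⁻¹ = 1 := mul_inv_cancel₀ hMC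
      linear_combination ((M:ℂ)*(a:ℂ)^2*τ*(n:ℂ)⁻¹ + 2*(M:ℂ)*(a:ℂ)*z + (M:ℂ)*(a:ℂ)*(b:ℂ)*(n:ℂ)⁻¹) * h1
        + (-((M:ℂ)*(a:ℂ)^2*τ*(n:ℂ)⁻¹) - (k:ℂ)*(a:ℂ)*τ*(n:ℂ)⁻¹) * h2
    · rw [if_neg h, if_neg h, mul_zero]
  have stepB : ∀ a ∈ Finset.range n,
      (∑ b ∈ Finset.range n, ∑' k : ℤ, if (2 * (m : ℤ)) ∣ (k - r - 2 * (M : ℤ) * a) then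
          e2 ((k : ℂ) ^ 2 / (4 * (m : ℂ)) * τ + (k : ℂ) * (z + (b : ℂ) / (n : ℂ)) +
            (-((b : ℂ) * ((M : ℂ) * a) / (n : ℂ)))) else 0)
      = (n : ℂ) * ∑' k : ℤ, if ((2 * (m : ℤ)) ∣ (k - r - 2 * (M : ℤ) * a) ∧ (n : ℤ) ∣ (k - (M : ℤ) * a))
          then e2 ((k : ℂ) ^ 2 / (4 * (m : ℂ)) * τ + (k : ℂ) * z) else 0 := by
    intro a _
    have hswap := Summable.tsum_finsetSum (s := Finset.range n)
      (f := fun (b : ℕ) (k : ℤ) => if (2 * (m : ℤ)) ∣ (k - r - 2 * (M : ℤ) * a) then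
          e2 ((k : ℂ) ^ 2 / (4 * (m : ℂ)) * τ + (k : ℂ) * (z + (b : ℂ) / (n : ℂ)) +
            (-((b : ℂ) * ((M : ℂ) * a) / (n : ℂ)))) else 0)
      (fun b _ => summable_e2 m hm hτ (z + (b : ℂ) / (n : ℂ))
        (-((b : ℂ) * ((M : ℂ) * a) / (n : ℂ))) _)
    rw [← hswap, ← tsum_mul_left]
    apply tsum_congr
    intro k
    by_cases h : (2 * (m : ℤ)) ∣ (k - r - 2 * (M : ℤ) * a)
    · have hterm : ∀ b ∈ Finset.range n,
          (if (2 * (m : ℤ)) ∣ (k - r - 2 * (M : ℤ) * a) then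
            e2 ((k : ℂ) ^ 2 / (4 * (m : ℂ)) * τ + (k : ℂ) * (z + (b : ℂ) / (n : ℂ)) +
              (-((b : ℂ) * ((M : ℂ) * a) / (n : ℂ)))) else 0)
          = e2 ((k : ℂ) ^ 2 / (4 * (m : ℂ)) * τ + (k : ℂ) * z) *
              e2 ((b : ℂ) * (((k - (M : ℤ) * a : ℤ)) : ℂ) / (n : ℂ)) := by
        intro b _
        rw [if_pos h, ← e2_add]
        congr 1
        push_cast
        ring
      rw [Finset.sum_congr rfl hterm, ← Finset.mul_sum, e2_geom n hn0 (k - (M : ℤ) * a)]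
      by_cases h2 : (n : ℤ) ∣ (k - (M : ℤ) * a)
      · rw [if_pos h2, if_pos ⟨h, h2⟩]; ring
      · rw [if_neg h2, if_neg (fun hc => h2 hc.2)]; ring
    · rw [if_neg (fun hc => h hc.1), mul_zero]
      exact Finset.sum_eq_zero fun b _ => if_neg h
  calc (n : ℂ)⁻¹ * ∑ a ∈ Finset.range n, ∑ b ∈ Finset.range n,
      e2 ((m : ℂ) * ((a : ℂ) ^ 2 / (n : ℂ) ^ 2 * τ + 2 * ((a : ℂ) / (n : ℂ)) * z +
        (a : ℂ) * (b : ℂ) / (n : ℂ) ^ 2)) *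
        jacTheta m r τ (z + ((a : ℂ) / (n : ℂ)) * τ + (b : ℂ) / (n : ℂ))
      = (n : ℂ)⁻¹ * ∑ a ∈ Finset.range n, ((n : ℂ) *
          ∑' k : ℤ, if ((2 * (m : ℤ)) ∣ (k - r - 2 * (M : ℤ) * a) ∧ (n : ℤ) ∣ (k - (M : ℤ) * a))
            then e2 ((k : ℂ) ^ 2 / (4 * (m : ℂ)) * τ + (k : ℂ) * z) else 0) := by
        congr 1
        refine Finset.sum_congr rfl fun a ha => ?_
        rw [← stepB a ha]
        exact Finset.sum_congr rfl fun b _ => stepA a b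
    _ = ∑ a ∈ Finset.range n,
          ∑' k : ℤ, if ((2 * (m : ℤ)) ∣ (k - r - 2 * (M : ℤ) * a) ∧ (n : ℤ) ∣ (k - (M : ℤ) * a))
            then e2 ((k : ℂ) ^ 2 / (4 * (m : ℂ)) * τ + (k : ℂ) * z) else 0 := by
        rw [← Finset.mul_sum, ← mul_assoc, inv_mul_cancel₀ hnC, one_mul]
    _ = ∑' k : ℤ, ∑ a ∈ Finset.range n,
          if ((2 * (m : ℤ)) ∣ (k - r - 2 * (M : ℤ) * a) ∧ (n : ℤ) ∣ (k - (M : ℤ) * a))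
            then e2 ((k : ℂ) ^ 2 / (4 * (m : ℂ)) * τ + (k : ℂ) * z) else 0 :=
        (Summable.tsum_finsetSum (fun a _ => summable_e2' m hm hτ z _)).symm
    _ = ∑' k : ℤ, if ((2 * (n : ℤ)) ∣ (k + r) ∧ (2 * (M : ℤ)) ∣ (k - r)) then
          e2 ((k : ℂ) ^ 2 / (4 * (m : ℂ)) * τ + (k : ℂ) * z) else 0 := by
        apply tsum_congr
        intro k
        have hsplit : ∀ a : ℕ,
            (if ((2 * (m : ℤ)) ∣ (k - r - 2 * (M : ℤ) * a) ∧ (n : ℤ) ∣ (k - (M : ℤ) * a))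
              then e2 ((k : ℂ) ^ 2 / (4 * (m : ℂ)) * τ + (k : ℂ) * z) else 0)
            = (if ((2 * (m : ℤ)) ∣ (k - r - 2 * (M : ℤ) * a) ∧ (n : ℤ) ∣ (k - (M : ℤ) * a))
              then (1 : ℂ) else 0) * e2 ((k : ℂ) ^ 2 / (4 * (m : ℂ)) * τ + (k : ℂ) * z) := by
          intro a; rw [ite_mul, one_mul, zero_mul]
        simp_rw [hsplit]
        rw [← Finset.sum_mul, count1 n M m hn0 hM0 hmM r k, ite_mul, one_mul, zero_mul]

lemma key2 (m n : ℕ) (hm : 0 < m) (hn : n ∣ m) (r : ℤ) {τ : ℂ} (hτ : 0 < τ.im) (z : ℂ) :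
    (∑ r' ∈ Finset.range (2 * m), OmegaEnt m n r (r' : ℤ) * jacTheta m (r' : ℤ) τ z)
      = ∑' k : ℤ, if ((2 * (n : ℤ)) ∣ (k + r) ∧ (2 * ((m / n : ℕ) : ℤ)) ∣ (k - r)) then
          e2 ((k : ℂ) ^ 2 / (4 * (m : ℂ)) * τ + (k : ℂ) * z) else 0 := by
  classical
  have hn0 : 0 < n := Nat.pos_of_dvd_of_pos hn hm
  set M : ℕ := m / n with hMdef
  have hM0 : 0 < M := Nat.div_pos (Nat.le_of_dvd hm hn) hn0
  have hmM : (m : ℤ) = n * M := by exact_mod_cast (Nat.mul_div_cancel' hn).symm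
  have hstep : ∀ r' ∈ Finset.range (2 * m),
      OmegaEnt m n r (r' : ℤ) * jacTheta m (r' : ℤ) τ z
      = ∑' k : ℤ, if ((2 * (n : ℤ)) ∣ (r + r') ∧ (2 * (M : ℤ)) ∣ (r - r') ∧
          (2 * (m : ℤ)) ∣ (k - r')) then
          e2 ((k : ℂ) ^ 2 / (4 * (m : ℂ)) * τ + (k : ℂ) * z) else 0 := by
    intro r' _
    rw [OmegaEnt, jacTheta]
    by_cases h : ((2 * (n : ℤ)) ∣ (r + r') ∧ (2 * (M : ℤ)) ∣ (r - r'))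
    · rw [if_pos h, one_mul]
      apply tsum_congr
      intro k
      by_cases h2 : (2 * (m : ℤ)) ∣ (k - r')
      · rw [if_pos h2, if_pos ⟨h.1, h.2, h2⟩]
      · rw [if_neg h2, if_neg (fun hc => h2 hc.2.2)]
    · rw [if_neg h, zero_mul]
      symm
      have : ∀ k : ℤ, (if ((2 * (n : ℤ)) ∣ (r + r') ∧ (2 * (M : ℤ)) ∣ (r - r') ∧
          (2 * (m : ℤ)) ∣ (k - r')) then
          e2 ((k : ℂ) ^ 2 / (4 * (m : ℂ)) * τ + (k : ℂ) * z) else 0) = 0 :=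
        fun k => if_neg (fun hc => h ⟨hc.1, hc.2.1⟩)
      rw [tsum_congr this]
      exact tsum_zero
  have hswap := Summable.tsum_finsetSum (s := Finset.range (2 * m))
    (f := fun (r' : ℕ) (k : ℤ) => if ((2 * (n : ℤ)) ∣ (r + r') ∧ (2 * (M : ℤ)) ∣ (r - r') ∧
        (2 * (m : ℤ)) ∣ (k - r')) then
        e2 ((k : ℂ) ^ 2 / (4 * (m : ℂ)) * τ + (k : ℂ) * z) else 0)
    (fun r' _ => summable_e2' m hm hτ z _)
  rw [Finset.sum_congr rfl hstep, ← hswap]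
  apply tsum_congr
  intro k
  have hsplit : ∀ a : ℕ,
      (if ((2 * (n : ℤ)) ∣ (r + a) ∧ (2 * (M : ℤ)) ∣ (r - a) ∧ (2 * (m : ℤ)) ∣ (k - a))
        then e2 ((k : ℂ) ^ 2 / (4 * (m : ℂ)) * τ + (k : ℂ) * z) else 0)
      = (if ((2 * (n : ℤ)) ∣ (r + a) ∧ (2 * (M : ℤ)) ∣ (r - a) ∧ (2 * (m : ℤ)) ∣ (k - a))
        then (1 : ℂ) else 0) * e2 ((k : ℂ) ^ 2 / (4 * (m : ℂ)) * τ + (k : ℂ) * z) := by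
    intro a; rw [ite_mul, one_mul, zero_mul]
  simp_rw [hsplit]
  rw [← Finset.sum_mul, count2 n M m hn0 hM0 hmM r k, ite_mul, one_mul, zero_mul]

/-- for `n ∣ m` and every `r`, `θ_{m,r}|W_m(n) = Σ_{r'} Ω_m(n)_{r,r'} θ_{m,r'}`;
consequently, for any vector `(h_r)` of functions on the upper half-plane,
`(Σ_r h_r θ_{m,r})|W_m(n) = Σ_{r,r'} h_r Ω_m(n)_{r,r'} θ_{m,r'}`. -/
theorem statement16 (m n : ℕ) (hm : 0 < m) (hn : n ∣ m) :
    (∀ r : ℤ, ∀ τ ∈ UHP, ∀ z : ℂ,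
      ezOp m n (jacTheta m r) τ z =
        ∑ r' ∈ Finset.range (2 * m), OmegaEnt m n r (r' : ℤ) * jacTheta m (r' : ℤ) τ z) ∧
    (∀ h : ℕ → ℂ → ℂ, ∀ τ ∈ UHP, ∀ z : ℂ,
      ezOp m n (fun τ' z' =>
        ∑ r ∈ Finset.range (2 * m), h r τ' * jacTheta m (r : ℤ) τ' z') τ z =
      ∑ r ∈ Finset.range (2 * m), ∑ r' ∈ Finset.range (2 * m),
        h r τ * OmegaEnt m n (r : ℤ) (r' : ℤ) * jacTheta m (r' : ℤ) τ z) := by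
  have part1 : ∀ r : ℤ, ∀ τ ∈ UHP, ∀ z : ℂ,
      ezOp m n (jacTheta m r) τ z =
        ∑ r' ∈ Finset.range (2 * m), OmegaEnt m n r (r' : ℤ) * jacTheta m (r' : ℤ) τ z := by
    intro r τ hτ z
    have hτ' : 0 < τ.im := hτ
    exact (key m n hm hn r hτ' z).trans (key2 m n hm hn r hτ' z).symm
  refine ⟨part1, ?_⟩
  intro h τ hτ z
  have lin : ezOp m n (fun τ' z' =>
        ∑ r ∈ Finset.range (2 * m), h r τ' * jacTheta m (r : ℤ) τ' z') τ z
      = ∑ r ∈ Finset.range (2 * m), h r τ * ezOp m n (jacTheta m (r : ℤ)) τ z := by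
    calc ezOp m n (fun τ' z' =>
        ∑ r ∈ Finset.range (2 * m), h r τ' * jacTheta m (r : ℤ) τ' z') τ z
        = (n : ℂ)⁻¹ * ∑ a ∈ Finset.range n, ∑ b ∈ Finset.range n,
            ∑ r ∈ Finset.range (2 * m), h r τ *
              (e2 ((m : ℂ) * ((a : ℂ) ^ 2 / (n : ℂ) ^ 2 * τ + 2 * ((a : ℂ) / (n : ℂ)) * z +
                (a : ℂ) * (b : ℂ) / (n : ℂ) ^ 2)) *
                jacTheta m (r : ℤ) τ (z + ((a : ℂ) / (n : ℂ)) * τ + (b : ℂ) / (n : ℂ))) := by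
          rw [ezOp]
          congr 1
          refine Finset.sum_congr rfl fun a _ => Finset.sum_congr rfl fun b _ => ?_
          rw [Finset.mul_sum]
          exact Finset.sum_congr rfl fun r _ => by ring
      _ = (n : ℂ)⁻¹ * ∑ r ∈ Finset.range (2 * m), ∑ a ∈ Finset.range n,
            ∑ b ∈ Finset.range n, h r τ *
              (e2 ((m : ℂ) * ((a : ℂ) ^ 2 / (n : ℂ) ^ 2 * τ + 2 * ((a : ℂ) / (n : ℂ)) * z +
                (a : ℂ) * (b : ℂ) / (n : ℂ) ^ 2)) *
                jacTheta m (r : ℤ) τ (z + ((a : ℂ) / (n : ℂ)) * τ + (b : ℂ) / (n : ℂ))) := by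
          congr 1
          rw [Finset.sum_congr rfl (fun a (_ : a ∈ Finset.range n) => Finset.sum_comm)]
          exact Finset.sum_comm
      _ = ∑ r ∈ Finset.range (2 * m), h r τ * ezOp m n (jacTheta m (r : ℤ)) τ z := by
          rw [Finset.mul_sum]
          refine Finset.sum_congr rfl fun r _ => ?_
          rw [ezOp]
          simp_rw [← Finset.mul_sum]
          ring
  rw [lin, Finset.sum_congr rfl (fun r (hr : r ∈ Finset.range (2 * m)) => ?_)]
  rw [part1 (r : ℤ) τ hτ z, Finset.mul_sum]
  exact Finset.sum_congr rfl fun r' _ => (mul_assoc _ _ _).symm
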